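/- For every n and k with k < n, there exists a family F of subsets of [n] such that every set in F has size at least 2, |F| ≤ k^{O(1)} · log n, and for every nonempty subset S ⊆ [n] with |S| ≤ k, there exists S' ∈ F with |S ∩ S'| = 1. -/

import Mathlib

open Finset

private lemma bern_one (q j : ℕ) (hq : 1 ≤ q) (h : 2 * j ≤ q) :
    q ^ j ≤ 2 * (q - 1) ^ j := by
  have hq0 : (0:ℚ) < (q:ℚ) := by exact_mod_cast hq
  have hb := one_add_mul_le_pow (a := -(1/(q:ℚ))) (by
    have h1 : (0:ℚ) ≤ 1/(q:ℚ) := by positivity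
    have h2 : (1:ℚ)/(q:ℚ) ≤ 1 := by
      rw [div_le_one hq0]; exact_mod_cast hq
    linarith) j
  have hhalf : (1:ℚ)/2 ≤ 1 + (j:ℚ) * (-(1/(q:ℚ))) := by
    have hjq : ((j:ℚ))/(q:ℚ) ≤ 1/2 := by
      rw [div_le_div_iff₀ hq0 (by norm_num)]
      have : (2*j : ℚ) ≤ (q:ℚ) := by exact_mod_cast h
      linarith
    have : (j:ℚ) * (-(1/(q:ℚ))) = -((j:ℚ)/(q:ℚ)) := by ring
    rw [this]; linarith
  have heq : (1 + -(1/(q:ℚ))) = ((q:ℚ)-1)/(q:ℚ) := by field_simp; ring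
  rw [heq, div_pow] at hb
  have hqj : (0:ℚ) < (q:ℚ)^j := pow_pos hq0 j
  have hfin : ((q:ℚ))^j ≤ 2 * ((q:ℚ)-1)^j := by
    rw [le_div_iff₀ hqj] at hb
    nlinarith [hb, hhalf, hqj]
  have hcast : ((q:ℚ)-1) = ((q-1 : ℕ) : ℚ) := by
    rw [Nat.cast_sub hq]; norm_num
  rw [hcast] at hfin
  exact_mod_cast hfin

private lemma bern_two (r : ℕ) (hr : 2 ≤ r) : 2 * (r - 1) ^ r ≤ r ^ r := by
  have h1 : (1:ℚ) ≤ (r:ℚ) - 1 := by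
    have : (2:ℚ) ≤ (r:ℚ) := by exact_mod_cast hr
    linarith
  have hpos : (0:ℚ) < (r:ℚ) - 1 := by linarith
  have hb := one_add_mul_le_pow (a := (1/((r:ℚ)-1))) (by
    have : (0:ℚ) ≤ 1/((r:ℚ)-1) := by positivity
    linarith) r
  have hge : (2:ℚ) ≤ 1 + (r:ℚ) * (1/((r:ℚ)-1)) := by
    rw [mul_one_div]
    have : (1:ℚ) ≤ (r:ℚ)/((r:ℚ)-1) := by
      rw [le_div_iff₀ hpos]; linarith
    linarith
  have heq : (1 + 1/((r:ℚ)-1)) = (r:ℚ)/((r:ℚ)-1) := by field_simp; ring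
  rw [heq, div_pow] at hb
  have hrp : (0:ℚ) < ((r:ℚ)-1)^r := pow_pos hpos r
  have hfin : 2 * ((r:ℚ)-1)^r ≤ (r:ℚ)^r := by
    rw [le_div_iff₀ hrp] at hb
    nlinarith [hb, hge, hrp]
  have hcast : ((r:ℚ)-1) = ((r-1 : ℕ) : ℚ) := by
    rw [Nat.cast_sub (by omega)]; norm_num
  rw [hcast] at hfin
  exact_mod_cast hfin

private lemma main_count (N L r M nk : ℕ) (hr : 2 ≤ r) (hM : 1 ≤ M) (hN : 0 < N)
    (hLN : L ≤ N) (h1 : N ≤ r * L) (h2 : 2 * (r - 1) ^ r ≤ r ^ r) (h3 : nk < 2 ^ M) :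
    nk * (N - L) ^ (r * M) < N ^ (r * M) := by
  set m := r * M with hm
  have hrpos : 0 < r - 1 := by omega
  have hpos : 0 < (r - 1) ^ m := Nat.pow_pos hrpos
  have hNm : 0 < N ^ m := Nat.pow_pos hN
  -- step1 : r * (N - L) ≤ (r-1) * N
  have step1 : r * (N - L) ≤ (r - 1) * N := by
    have e3 : r * L = (r-1) * L + L := by
      have : r = (r-1) + 1 := by omega
      nth_rewrite 1 [this]; rw [add_mul, one_mul]
    have e4 : r * N = (r-1) * N + N := by
      have : r = (r-1) + 1 := by omega
      nth_rewrite 1 [this]; rw [add_mul, one_mul]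
    have e5 : r * (N - L) + r * L = r * N := by
      rw [← Nat.mul_add, Nat.sub_add_cancel hLN]
    omega
  have step2 : (r * (N - L)) ^ m ≤ ((r - 1) * N) ^ m := Nat.pow_le_pow_left step1 m
  have step4 : 2 ^ M * (r - 1) ^ m ≤ r ^ m := by
    calc 2 ^ M * (r - 1) ^ m = (2 * (r-1) ^ r) ^ M := by
          rw [mul_pow, hm, pow_mul]
      _ ≤ (r ^ r) ^ M := Nat.pow_le_pow_left h2 M
      _ = r ^ m := by rw [hm, pow_mul]
  have step5 : nk * (r - 1) ^ m < 2 ^ M * (r - 1) ^ m :=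
    Nat.mul_lt_mul_of_lt_of_le h3 le_rfl hpos
  have chain : (nk * (N - L) ^ m) * r ^ m < N ^ m * r ^ m := by
    calc (nk * (N - L) ^ m) * r ^ m = nk * ((r * (N - L)) ^ m) := by
          rw [mul_pow]; ring
      _ ≤ nk * (((r-1) * N) ^ m) := Nat.mul_le_mul_left nk step2
      _ = (nk * (r-1) ^ m) * N ^ m := by rw [mul_pow]; ring
      _ < (2 ^ M * (r-1) ^ m) * N ^ m := Nat.mul_lt_mul_of_lt_of_le step5 le_rfl hNm
      _ ≤ r ^ m * N ^ m := Nat.mul_le_mul_right _ step4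
      _ = N ^ m * r ^ m := mul_comm _ _
  exact lt_of_mul_lt_mul_right chain (Nat.zero_le _)

private lemma good_count (n q k : ℕ) [NeZero q] (hq : 1 ≤ q) (hkn : k < n)
    (S : Finset (Fin n)) (hS : S.Nonempty) (hSk : S.card ≤ k) :
    (q - 1) ^ (k - 1) * q ^ (n - k - 1) ≤
      (univ.filter fun g : Fin n → Fin q =>
        ((S ∩ univ.filter fun x => g x = 0).card = 1 ∧
          ((univ.filter fun x => g x = 0) \ S).Nonempty)).card := by
  classical
  obtain ⟨x₀, hx₀⟩ := hS
  have hScard : S.card < n := lt_of_le_of_lt hSk hkn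
  have hSne : Sᶜ.Nonempty := by
    rw [← Finset.card_pos, Finset.card_compl, Fintype.card_fin]
    omega
  obtain ⟨y₀, hy₀c⟩ := hSne
  have hy₀ : y₀ ∉ S := Finset.mem_compl.mp hy₀c
  have hxy : x₀ ≠ y₀ := fun h => hy₀ (h ▸ hx₀)
  set T : Fin n → Finset (Fin q) := fun x =>
    if x = x₀ then {0} else if x ∈ S then {(0 : Fin q)}ᶜ else if x = y₀ then {0} else univ
    with hT
  have hsub : Fintype.piFinset T ⊆
      (univ.filter fun g : Fin n → Fin q =>
        ((S ∩ univ.filter fun x => g x = 0).card = 1 ∧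
          ((univ.filter fun x => g x = 0) \ S).Nonempty)) := by
    intro g hg
    rw [Fintype.mem_piFinset] at hg
    have hgx₀ : g x₀ = 0 := by
      have := hg x₀
      simp [hT] at this
      exact this
    have hgy₀ : g y₀ = 0 := by
      have := hg y₀
      simp [hT, Ne.symm hxy, hy₀] at this
      exact this
    have hgS : ∀ x ∈ S, x ≠ x₀ → g x ≠ 0 := by
      intro x hxS hne
      have := hg x
      rw [hT] at this
      simp only [if_neg hne, if_pos hxS, Finset.mem_compl, Finset.mem_singleton] at this
      exact this
    refine Finset.mem_filter.mpr ⟨Finset.mem_univ _, ?_, ?_⟩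
    · have : S ∩ (univ.filter fun x => g x = 0) = {x₀} := by
        ext z
        simp only [Finset.mem_inter, Finset.mem_filter, Finset.mem_univ, true_and,
          Finset.mem_singleton]
        constructor
        · rintro ⟨hzS, hz0⟩
          by_contra hne
          exact hgS z hzS hne hz0
        · rintro rfl
          exact ⟨hx₀, hgx₀⟩
      rw [this, Finset.card_singleton]
    · exact ⟨y₀, Finset.mem_sdiff.mpr ⟨Finset.mem_filter.mpr ⟨Finset.mem_univ _, hgy₀⟩, hy₀⟩⟩
  have hprod : (Fintype.piFinset T).card = (q - 1) ^ (S.card - 1) * q ^ (n - S.card - 1) := by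
    rw [Fintype.card_piFinset]
    rw [← Finset.prod_mul_prod_compl S]
    have h1 : ∏ x ∈ S, (T x).card = (q - 1) ^ (S.card - 1) := by
      rw [← Finset.mul_prod_erase S _ hx₀]
      have hx₀card : (T x₀).card = 1 := by rw [hT]; simp
      have hrest : ∀ x ∈ S.erase x₀, (T x).card = q - 1 := by
        intro x hx
        obtain ⟨hne, hxS⟩ := Finset.mem_erase.mp hx
        rw [hT]
        simp only [if_neg hne, if_pos hxS]
        rw [Finset.card_compl, Finset.card_singleton, Fintype.card_fin]
      rw [hx₀card, one_mul, Finset.prod_congr rfl hrest, Finset.prod_const,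
        Finset.card_erase_of_mem hx₀]
    have h2 : ∏ x ∈ Sᶜ, (T x).card = q ^ (n - S.card - 1) := by
      rw [← Finset.mul_prod_erase Sᶜ _ hy₀c]
      have hy₀card : (T y₀).card = 1 := by
        simp [hT, Ne.symm hxy, hy₀]
      have hrest : ∀ x ∈ Sᶜ.erase y₀, (T x).card = q := by
        intro x hx
        obtain ⟨hne, hxc⟩ := Finset.mem_erase.mp hx
        have hxS : x ∉ S := Finset.mem_compl.mp hxc
        have hnx₀ : x ≠ x₀ := fun h => hxS (h ▸ hx₀)
        rw [hT]
        simp only [if_neg hnx₀, if_neg hxS, if_neg hne]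
        rw [Finset.card_univ, Fintype.card_fin]
      rw [hy₀card, one_mul, Finset.prod_congr rfl hrest, Finset.prod_const,
        Finset.card_erase_of_mem hy₀c, Finset.card_compl, Fintype.card_fin]
    rw [h1, h2]
  have hmono : (q - 1) ^ (k - 1) * q ^ (n - k - 1) ≤
      (q - 1) ^ (S.card - 1) * q ^ (n - S.card - 1) := by
    have hs1 : 1 ≤ S.card := Finset.card_pos.mpr ⟨x₀, hx₀⟩
    have e1 : (q - 1) ^ (k - 1) = (q - 1) ^ (S.card - 1) * (q - 1) ^ (k - S.card) := by
      rw [← pow_add]; congr 1; omega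
    have e2 : q ^ (n - S.card - 1) = q ^ (k - S.card) * q ^ (n - k - 1) := by
      rw [← pow_add]; congr 1; omega
    rw [e1, e2]
    have : (q - 1) ^ (k - S.card) ≤ q ^ (k - S.card) :=
      Nat.pow_le_pow_left (Nat.sub_le q 1) _
    calc (q-1)^(S.card-1) * (q-1)^(k-S.card) * q^(n-k-1)
        ≤ (q-1)^(S.card-1) * q^(k-S.card) * q^(n-k-1) := by
          exact Nat.mul_le_mul_right _ (Nat.mul_le_mul_left _ this)
      _ = (q-1)^(S.card-1) * (q^(k-S.card) * q^(n-k-1)) := by ring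
  calc (q - 1) ^ (k - 1) * q ^ (n - k - 1)
      ≤ (q - 1) ^ (S.card - 1) * q ^ (n - S.card - 1) := hmono
    _ = (Fintype.piFinset T).card := hprod.symm
    _ ≤ _ := Finset.card_le_card hsub

private lemma mem_cand {n k : ℕ} (S : Finset (Fin n)) (hS : S.Nonempty) (hSk : S.card ≤ k) :
    S ∈ (univ : Finset (Fin k → Fin n)).image (fun f => univ.image f) := by
  classical
  obtain ⟨x₀, hx₀⟩ := hS
  set e := S.orderIsoOfFin rfl with he
  refine Finset.mem_image.mpr
    ⟨fun i => if h : (i : ℕ) < S.card then (e ⟨i, h⟩ : Fin n) else x₀, Finset.mem_univ _, ?_⟩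
  ext y
  simp only [Finset.mem_image, Finset.mem_univ, true_and]
  constructor
  · rintro ⟨i, rfl⟩
    split
    · exact (e _).2
    · exact hx₀
  · intro hy
    set j := e.symm ⟨y, hy⟩ with hj
    refine ⟨⟨(j : ℕ), lt_of_lt_of_le j.isLt hSk⟩, ?_⟩
    rw [dif_pos (show ((⟨(j : ℕ), lt_of_lt_of_le j.isLt hSk⟩ : Fin k) : ℕ) < S.card from j.isLt)]
    have : (⟨(j : ℕ), j.isLt⟩ : Fin S.card) = j := rfl
    rw [this, hj]
    simp

theorem unbalanced_isolating_family :
    ∃ C : ℕ, ∀ n k : ℕ, k < n →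
      ∃ F : Finset (Finset (Fin n)),
        (∀ A ∈ F, 2 ≤ A.card) ∧
        F.card ≤ C * k ^ C * (Nat.log 2 n + 1) ∧
        ∀ S : Finset (Fin n), S.Nonempty → S.card ≤ k →
          ∃ A ∈ F, (S ∩ A).card = 1 := by
  classical
  use 16
  intro n k hk
  rcases Nat.eq_zero_or_pos k with rfl | hk1
  · refine ⟨∅, by simp, by simp, fun S hS hcard => ?_⟩
    exact absurd (Finset.card_eq_zero.mp (Nat.le_zero.mp hcard)) hS.ne_empty
  · have hn2 : 2 ≤ n := by omega
    set q := 2 * k with hqdef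
    haveI : NeZero q := ⟨by omega⟩
    have hq2 : 2 ≤ q := by omega
    set r := 2 * q ^ 2 with hrdef
    have hq4 : 4 ≤ q ^ 2 := by
      calc (4:ℕ) = 2 ^ 2 := by norm_num
        _ ≤ q ^ 2 := Nat.pow_le_pow_left hq2 2
    have hr2 : 2 ≤ r := by omega
    set M := k * (Nat.log 2 n + 1) + 1 with hMdef
    set m := r * M with hmdef
    set N := q ^ n with hNdef
    set L := (q - 1) ^ (k - 1) * q ^ (n - k - 1) with hLdef
    have hNpos : 0 < N := by
      rw [hNdef]; exact Nat.pow_pos (by omega)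
    have key1 : N ≤ r * L := by
      have hb := bern_one q (k - 1) (by omega) (by omega)
      have e : q ^ n = q ^ (k-1) * (q ^ (n-k-1) * q ^ 2) := by
        rw [← pow_add, ← pow_add]; congr 1; omega
      calc N = q ^ (k-1) * (q ^ (n-k-1) * q ^ 2) := by rw [hNdef]; exact e
        _ ≤ (2 * (q-1) ^ (k-1)) * (q ^ (n-k-1) * q ^ 2) := Nat.mul_le_mul_right _ hb
        _ = r * L := by rw [hrdef, hLdef]; ring
    have hLN : L ≤ N := by
      calc L ≤ q ^ (k-1) * q ^ (n-k-1) := by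
            rw [hLdef]
            exact Nat.mul_le_mul_right _ (Nat.pow_le_pow_left (Nat.sub_le q 1) _)
        _ = q ^ ((k-1) + (n-k-1)) := (pow_add q _ _).symm
        _ ≤ q ^ n := Nat.pow_le_pow_right (by omega) (by omega)
    have key2 := bern_two r hr2
    have key3 : n ^ k < 2 ^ M := by
      have hlog : n < 2 ^ (Nat.log 2 n + 1) := Nat.lt_pow_succ_log_self (by norm_num) n
      calc n ^ k ≤ (2 ^ (Nat.log 2 n + 1)) ^ k := Nat.pow_le_pow_left hlog.le k
        _ = 2 ^ (k * (Nat.log 2 n + 1)) := by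
            rw [← pow_mul, mul_comm]
        _ < 2 ^ M := by
            rw [hMdef]
            exact Nat.pow_lt_pow_right (by norm_num) (by omega)
    obtain ⟨ω, hω⟩ : ∃ ω : Fin m → Fin n → Fin q, ∀ S : Finset (Fin n),
        S.Nonempty → S.card ≤ k → ∃ i,
          ((S ∩ univ.filter fun x => ω i x = 0).card = 1 ∧
            ((univ.filter fun x => ω i x = 0) \ S).Nonempty) := by
      by_contra hcon
      push_neg at hcon
      set cand := (univ : Finset (Fin k → Fin n)).image (fun f => univ.image f) with hcanddef
      set B : Finset (Fin n) → Finset (Fin m → Fin n → Fin q) := fun S =>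
        univ.filter fun ω => ∀ i,
          ¬(((S ∩ univ.filter fun x => ω i x = 0).card = 1) ∧
            ((univ.filter fun x => ω i x = 0) \ S).Nonempty) with hBdef
      have hsub : (univ : Finset (Fin m → Fin n → Fin q)) ⊆ cand.biUnion B := by
        intro ω' _
        obtain ⟨S, hne, hcard, hbad⟩ := hcon ω'
        refine Finset.mem_biUnion.mpr ⟨S, mem_cand S hne hcard, ?_⟩
        refine Finset.mem_filter.mpr ⟨Finset.mem_univ _, fun i hpq => ?_⟩
        exact absurd hpq.2 (by simpa using hbad i hpq.1)
      have hcardΩ : ((univ : Finset (Fin m → Fin n → Fin q)).card : ℕ) = N ^ m := by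
        rw [Finset.card_univ, Fintype.card_fun, Fintype.card_fun, Fintype.card_fin,
          Fintype.card_fin, Fintype.card_fin, hNdef]
      have hBS : ∀ S ∈ cand, (B S).card ≤ (N - L) ^ m := by
        intro S hSc
        obtain ⟨f, -, rfl⟩ := Finset.mem_image.mp hSc
        haveI : Nonempty (Fin k) := ⟨⟨0, hk1⟩⟩
        have hne : (univ.image f).Nonempty := Finset.image_nonempty.mpr Finset.univ_nonempty
        have hcardk : (univ.image f).card ≤ k :=
          le_trans Finset.card_image_le (by simp)
        have hpi : B (univ.image f) = Fintype.piFinset (fun _ : Fin m =>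
            univ.filter fun g : Fin n → Fin q =>
              ¬((((univ.image f) ∩ univ.filter fun x => g x = 0).card = 1) ∧
                ((univ.filter fun x => g x = 0) \ (univ.image f)).Nonempty)) := by
          ext ω'
          simp [hBdef, Fintype.mem_piFinset]
        rw [hpi, Fintype.card_piFinset, Finset.prod_const, Finset.card_univ, Fintype.card_fin]
        apply Nat.pow_le_pow_left
        have hgc := good_count n q k (by omega) hk (univ.image f) hne hcardk
        rw [← hLdef] at hgc
        have hsplit := Finset.card_filter_add_card_filter_not
          (s := (univ : Finset (Fin n → Fin q)))
          (p := fun g : Fin n → Fin q =>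
            ((((univ.image f) ∩ univ.filter fun x => g x = 0).card = 1) ∧
              ((univ.filter fun x => g x = 0) \ (univ.image f)).Nonempty))
        have huniv : ((univ : Finset (Fin n → Fin q)).card : ℕ) = N := by
          rw [Finset.card_univ, Fintype.card_fun, Fintype.card_fin, Fintype.card_fin, hNdef]
        rw [huniv] at hsplit
        refine le_trans (le_of_eq (Nat.eq_sub_of_add_eq' hsplit)) (Nat.sub_le_sub_left hgc N)
      have hsum : N ^ m ≤ cand.card * (N - L) ^ m := by
        calc N ^ m = (univ : Finset (Fin m → Fin n → Fin q)).card := hcardΩ.symm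
          _ ≤ (cand.biUnion B).card := Finset.card_le_card hsub
          _ ≤ ∑ S ∈ cand, (B S).card := Finset.card_biUnion_le
          _ ≤ ∑ _S ∈ cand, (N - L) ^ m := Finset.sum_le_sum hBS
          _ = cand.card * (N - L) ^ m := by rw [Finset.sum_const, smul_eq_mul]
      have hcandcard : cand.card ≤ n ^ k := by
        calc cand.card ≤ (univ : Finset (Fin k → Fin n)).card := Finset.card_image_le
          _ = n ^ k := by rw [Finset.card_univ, Fintype.card_fun, Fintype.card_fin,
                Fintype.card_fin]
      have hfinal := main_count N L r M (n ^ k) hr2 (by omega) hNpos hLN key1 key2 key3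
      rw [← hmdef] at hfinal
      have hle : N ^ m ≤ n ^ k * (N - L) ^ m :=
        le_trans hsum (Nat.mul_le_mul_right _ hcandcard)
      exact lt_irrefl _ (lt_of_le_of_lt hle hfinal)
    refine ⟨(Finset.image (fun i : Fin m => univ.filter fun x => ω i x = 0) univ).filter
        (fun A => 2 ≤ A.card), ?_, ?_, ?_⟩
    · intro A hA
      exact (Finset.mem_filter.mp hA).2
    · have hP : 1 ≤ Nat.log 2 n + 1 := by omega
      have h3 : k ^ 3 ≤ k ^ 16 := Nat.pow_le_pow_right hk1 (by omega)
      have h2 : k ^ 2 ≤ k ^ 16 := Nat.pow_le_pow_right hk1 (by omega)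
      have hA : k ^ 3 * (Nat.log 2 n + 1) ≤ k ^ 16 * (Nat.log 2 n + 1) :=
        Nat.mul_le_mul_right _ h3
      have hB2 : k ^ 2 ≤ k ^ 16 * (Nat.log 2 n + 1) :=
        le_trans h2 (Nat.le_mul_of_pos_right _ (by omega))
      have hmbound : m ≤ 16 * k ^ 16 * (Nat.log 2 n + 1) := by
        calc m = 8 * (k ^ 3 * (Nat.log 2 n + 1)) + 8 * k ^ 2 := by
              rw [hmdef, hrdef, hMdef, hqdef]; ring
          _ ≤ 8 * (k ^ 16 * (Nat.log 2 n + 1)) + 8 * (k ^ 16 * (Nat.log 2 n + 1)) :=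
              Nat.add_le_add (Nat.mul_le_mul_left _ hA) (Nat.mul_le_mul_left _ hB2)
          _ = 16 * k ^ 16 * (Nat.log 2 n + 1) := by ring
      calc ((Finset.image (fun i : Fin m => univ.filter fun x => ω i x = 0) univ).filter
            (fun A => 2 ≤ A.card)).card
          ≤ (Finset.image (fun i : Fin m => univ.filter fun x => ω i x = 0) univ).card :=
            Finset.card_filter_le _ _
        _ ≤ (univ : Finset (Fin m)).card := Finset.card_image_le
        _ = m := by rw [Finset.card_univ, Fintype.card_fin]
        _ ≤ 16 * k ^ 16 * (Nat.log 2 n + 1) := hmbound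
    · intro S hS hSk
      obtain ⟨i, h1, h2⟩ := hω S hS hSk
      refine ⟨univ.filter fun x => ω i x = 0, Finset.mem_filter.mpr
        ⟨Finset.mem_image.mpr ⟨i, Finset.mem_univ _, rfl⟩, ?_⟩, h1⟩
      obtain ⟨x, hx⟩ := Finset.card_eq_one.mp h1
      obtain ⟨y, hy⟩ := h2
      have hxm : x ∈ S ∩ (univ.filter fun z => ω i z = 0) := by
        rw [hx]; exact Finset.mem_singleton_self x
      obtain ⟨hxS, hxA⟩ := Finset.mem_inter.mp hxm
      obtain ⟨hyA, hyS⟩ := Finset.mem_sdiff.mp hy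
      exact Finset.one_lt_card.mpr ⟨x, hxA, y, hyA, fun h => hyS (h ▸ hxS)⟩
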